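/- For all n ≥ 0, the only word that is simultaneously a suffix of z_{n−1} and a prefix of z_n is the empty word. -/

import Mathlib

/-- The `m`-bonacci morphism `φ_m` on letters:
`φ_m(k) = 0·(k+1)` for `0 ≤ k ≤ m-2`, and `φ_m(m-1) = 0`. -/
def phiL (m a : ℕ) : List ℕ := if a = m - 1 then [0] else [0, a + 1]

/-- The `m`-bonacci morphism applied to a finite word. -/
def phiW (m : ℕ) (u : List ℕ) : List ℕ := u.flatMap (phiL m)

/-- The iterates `h n = φ_mⁿ(0)`. -/
def hword (m : ℕ) : ℕ → List ℕ
  | 0 => [0]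
  | n + 1 => phiW m (hword m n)

/-- The `m`-bonacci word, the infinite fixed point of `φ_m` beginning with `0`
(its `i`-th letter is the `i`-th letter of any sufficiently long iterate `φ_mⁿ(0)`). -/
def mbon (m : ℕ) : ℕ → ℕ := fun i => (hword m (i + 1)).getD i 0

/-- Auxiliary course-of-values construction for the p-singular words:
`zsAux m (k+1) i` gives the correct value of the (index-shifted) p-singular word
`z_{i-1}` for every `i ≤ k`. -/
def zsAux (m : ℕ) : ℕ → ℕ → List ℕ
  | 0, _ => []
  | k + 1, i =>
    if i < k then zsAux m k i
    else if i = 0 then []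
    else if i = 1 then [0]
    else if i ≤ m then
      -- here `i = n+1` with `1 ≤ n ≤ m-1`:
      -- `z_n = z_{n-2} z_{n-3} ⋯ z_1 z_0 · n · z_0 z_1 ⋯ z_{n-3} z_{n-2}`
      (((List.range (i - 2)).map (fun j => zsAux m k (i - 2 - j))).flatten)
        ++ [i - 1]
        ++ (((List.range (i - 2)).map (fun j => zsAux m k (1 + j))).flatten)
    else
      -- here `i = n+1` with `n ≥ m`:
      -- `z_n = z_{n-2} ⋯ z_{n-(m-1)} · z_{n-m} · z_{n-(m+1)} · z_{n-m} · z_{n-(m-1)} ⋯ z_{n-2}`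
      (((List.range (m - 2)).map (fun j => zsAux m k (i - 2 - j))).flatten)
        ++ zsAux m k (i - m) ++ zsAux m k (i - m - 1) ++ zsAux m k (i - m)
        ++ (((List.range (m - 2)).map (fun j => zsAux m k (i - m + 1 + j))).flatten)

/-- The (index-shifted) p-singular words for the `m`-bonacci word:
`zsw m 0 = z₋₁ = ε`, and `zsw m (n+1) = zₙ` for `n ≥ 0`, where
`z₀ = 0`, `zₙ = z_{n-2} z_{n-3} ⋯ z_1 z_0 · n · z_0 z_1 ⋯ z_{n-3} z_{n-2}` for `1 ≤ n ≤ m-1`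
(`n` denoting the single letter `n`), and
`zₙ = z_{n-2} z_{n-3} ⋯ z_{n-(m-1)} z_{n-m} z_{n-(m+1)} z_{n-m} z_{n-(m-1)} ⋯ z_{n-3} z_{n-2}`
for `n ≥ m`. -/
def zsw (m k : ℕ) : List ℕ := zsAux m (k + 1) k

namespace PSing

variable {m : ℕ}

/-- parity pad -/
def pad (i : ℕ) : List ℕ := if i % 2 = 1 then [0] else []

lemma pad_congr {i j : ℕ} (h : i % 2 = j % 2) : pad i = pad j := by simp [pad, h]

lemma phiW_nil : phiW m [] = [] := rfl

lemma phiW_cons (a : ℕ) (u : List ℕ) : phiW m (a :: u) = phiL m a ++ phiW m u := by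
  simp [phiW]

lemma phiW_append (u v : List ℕ) : phiW m (u ++ v) = phiW m u ++ phiW m v := by
  simp [phiW]

lemma phiW_singleton (a : ℕ) : phiW m [a] = phiL m a := by simp [phiW]

lemma phiL_of_ne {a : ℕ} (h : a ≠ m - 1) : phiL m a = [0, a+1] := by simp [phiL, h]

lemma phiL_of_eq : phiL m (m-1) = [0] := by simp [phiL]

lemma phiW_cons_ne {a : ℕ} (h : a ≠ m - 1) (u : List ℕ) :
    phiW m (a :: u) = 0 :: (a+1) :: phiW m u := by
  simp [phiW_cons, phiL_of_ne h]

lemma phiW_cons_eq (u : List ℕ) :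
    phiW m ((m-1) :: u) = 0 :: phiW m u := by
  simp [phiW_cons, phiL_of_eq]

lemma phiW_head {v : List ℕ} (hv : v ≠ []) : ∃ w, phiW m v = 0 :: w := by
  cases v with
  | nil => simp at hv
  | cons a v' =>
    by_cases h : a = m - 1
    · subst h; exact ⟨phiW m v', phiW_cons_eq v'⟩
    · exact ⟨(a+1) :: phiW m v', phiW_cons_ne h v'⟩

lemma phiW_ne_nil {v : List ℕ} (hv : v ≠ []) : phiW m v ≠ [] := by
  obtain ⟨w, hw⟩ := phiW_head (m := m) hv
  simp [hw]

lemma phiW_eq_nil {v : List ℕ} (hv : phiW m v = []) : v = [] := by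
  by_contra h
  exact phiW_ne_nil h hv

end PSing
namespace PSing

variable {m : ℕ}

lemma zsw_zero : zsw m 0 = [] := rfl

lemma zsw_one : zsw m 1 = [0] := rfl

lemma zsAux_stable : ∀ k i, i < k → zsAux m k i = zsw m i := by
  intro k
  induction k with
  | zero => intro i h; omega
  | succ k ih =>
    intro i h
    rcases Nat.lt_or_ge i k with hk | hk
    · have : zsAux m (k+1) i = zsAux m k i := by
        conv_lhs => rw [zsAux]
        simp only [if_pos hk]
      rw [this]; exact ih i hk
    · have : i = k := by omega
      subst this
      rfl

/-- ascending segment: `y b, y (b+1), …, y (b+l-1)` -/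
def useg (m b l : ℕ) : List ℕ := ((List.range l).map (fun j => zsw m (b + j))).flatten

/-- descending segment: `y (b+l-1), …, y (b+1), y b` -/
def dseg (m b l : ℕ) : List ℕ := ((List.range l).map (fun j => zsw m (b + l - 1 - j))).flatten

lemma useg_zero (b : ℕ) : useg m b 0 = [] := rfl
lemma dseg_zero (b : ℕ) : dseg m b 0 = [] := rfl

lemma useg_succ (b l : ℕ) : useg m b (l+1) = zsw m b ++ useg m (b+1) l := by
  unfold useg
  rw [List.range_succ_eq_map]
  simp only [List.map_cons, List.flatten_cons, Nat.add_zero, List.map_map]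
  congr 1
  congr 1
  apply List.map_congr_left
  intro j hj
  simp only [Function.comp_apply]
  congr 1
  omega

lemma dseg_succ (b l : ℕ) : dseg m b (l+1) = dseg m (b+1) l ++ zsw m b := by
  unfold dseg
  rw [List.range_succ, List.map_append, List.flatten_append]
  congr 1
  · congr 1
    apply List.map_congr_left
    intro j hj
    congr 1
    omega
  · simp only [List.map_cons, List.map_nil, List.flatten_cons, List.flatten_nil,
      List.append_nil]
    congr 1
    omega

end PSing
namespace PSing

variable {m : ℕ}

lemma zsw_recA {i : ℕ} (h2 : 2 ≤ i) (hi : i ≤ m) :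
    zsw m i = dseg m 1 (i-2) ++ [i-1] ++ useg m 1 (i-2) := by
  have h0 : ¬ i < i := lt_irrefl i
  have h1 : ¬ i = 0 := by omega
  have h1' : ¬ i = 1 := by omega
  show zsAux m (i+1) i = _
  rw [zsAux]
  simp only [if_neg h0, if_neg h1, if_neg h1', if_pos hi]
  congr 1
  · congr 1
    unfold dseg
    congr 1
    apply List.map_congr_left
    intro j hj
    have hj' : j < i - 2 := List.mem_range.mp hj
    rw [zsAux_stable _ _ (by omega)]
    congr 1
    omega
  · unfold useg
    congr 1
    apply List.map_congr_left
    intro j hj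
    have hj' : j < i - 2 := List.mem_range.mp hj
    rw [zsAux_stable _ _ (by omega)]

lemma zsw_recB {i : ℕ} (hi : m + 1 ≤ i) (hm : 2 ≤ m) :
    zsw m i = dseg m (i-m+1) (m-2) ++ zsw m (i-m) ++ zsw m (i-m-1) ++ zsw m (i-m)
      ++ useg m (i-m+1) (m-2) := by
  have h0 : ¬ i < i := lt_irrefl i
  have h1 : ¬ i = 0 := by omega
  have h1' : ¬ i = 1 := by omega
  have h3 : ¬ i ≤ m := by omega
  show zsAux m (i+1) i = _
  rw [zsAux]
  simp only [if_neg h0, if_neg h1, if_neg h1', if_neg h3]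
  congr 1
  · congr 1
    · congr 1
      · congr 1
        · unfold dseg
          congr 1
          apply List.map_congr_left
          intro j hj
          have hj' : j < m - 2 := List.mem_range.mp hj
          rw [zsAux_stable _ _ (by omega)]
          congr 1
          omega
        · exact zsAux_stable _ _ (by omega)
      · exact zsAux_stable _ _ (by omega)
    · exact zsAux_stable _ _ (by omega)
  · unfold useg
    congr 1
    apply List.map_congr_left
    intro j hj
    have hj' : j < m - 2 := List.mem_range.mp hj
    rw [zsAux_stable _ _ (by omega)]

end PSing
namespace PSing

variable {m : ℕ}

lemma append_ctx {A B C D : List ℕ} (h : A ++ B = C ++ D) (Y : List ℕ) :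
    A ++ (B ++ Y) = C ++ (D ++ Y) := by
  rw [← List.append_assoc, h, List.append_assoc]

lemma pad_zero : pad 0 = [] := rfl
lemma pad_one : pad 1 = [0] := rfl

lemma tele_u : ∀ l b, (∀ j, b ≤ j → j < b + l →
      pad j ++ zsw m (j+1) = phiW m (zsw m j) ++ pad (j+1)) →
    pad b ++ useg m (b+1) l = phiW m (useg m b l) ++ pad (b+l) := by
  intro l
  induction l with
  | zero => intro b _; simp [useg_zero, phiW_nil]
  | succ l ih =>
    intro b hE
    have hb := hE b le_rfl (by omega)
    have ih' := ih (b+1) (fun j h1 h2 => hE j (by omega) (by omega))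
    rw [useg_succ, useg_succ, phiW_append]
    have e1 : b + 1 + (l + 1) = b + 1 + l + 1 := by omega
    calc pad b ++ (zsw m (b+1) ++ useg m (b+2) l)
        = (pad b ++ zsw m (b+1)) ++ useg m (b+2) l := by rw [List.append_assoc]
      _ = (phiW m (zsw m b) ++ pad (b+1)) ++ useg m (b+2) l := by rw [hb]
      _ = phiW m (zsw m b) ++ (pad (b+1) ++ useg m (b+2) l) := by rw [List.append_assoc]
      _ = phiW m (zsw m b) ++ (phiW m (useg m (b+1) l) ++ pad (b+1+l)) := by rw [ih']
      _ = phiW m (zsw m b) ++ phiW m (useg m (b+1) l) ++ pad (b + (l+1)) := by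
          rw [List.append_assoc, show b + (l+1) = b+1+l from by omega]

lemma tele_d : ∀ l b, (∀ j, b ≤ j → j < b + l →
      pad j ++ zsw m (j+1) = phiW m (zsw m j) ++ pad (j+1)) →
    phiW m (dseg m b l) ++ pad (b+1) = pad (b+l+1) ++ dseg m (b+1) l := by
  intro l
  induction l with
  | zero => intro b _; simp [dseg_zero, phiW_nil]
  | succ l ih =>
    intro b hE
    have hb := hE b le_rfl (by omega)
    have ih' := ih (b+1) (fun j h1 h2 => hE j (by omega) (by omega))
    rw [dseg_succ, dseg_succ, phiW_append]
    have e2 : pad b = pad (b+2) := pad_congr (by omega)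
    calc phiW m (dseg m (b+1) l) ++ phiW m (zsw m b) ++ pad (b+1)
        = phiW m (dseg m (b+1) l) ++ (phiW m (zsw m b) ++ pad (b+1)) := by
          rw [List.append_assoc]
      _ = phiW m (dseg m (b+1) l) ++ (pad b ++ zsw m (b+1)) := by rw [hb]
      _ = (phiW m (dseg m (b+1) l) ++ pad (b+1+1)) ++ zsw m (b+1) := by
          rw [List.append_assoc, ← e2]
      _ = (pad (b+1+l+1) ++ dseg m (b+2) l) ++ zsw m (b+1) := by rw [ih']
      _ = pad (b+(l+1)+1) ++ (dseg m (b+2) l ++ zsw m (b+1)) := by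
          rw [List.append_assoc, show b+(l+1)+1 = b+1+l+1 from by omega]

theorem erel_all (hm : 2 ≤ m) :
    ∀ i, pad i ++ zsw m (i+1) = phiW m (zsw m i) ++ pad (i+1) := by
  intro i
  induction i using Nat.strong_induction_on with
  | _ i ih =>
    rcases i with _ | _ | i
    · simp [zsw_zero, zsw_one, phiW_nil, pad]
    · have h2 : zsw m 2 = [1] := by
        rw [zsw_recA le_rfl hm]; simp [dseg_zero, useg_zero]
      have h0 : (0:ℕ) ≠ m - 1 := by omega
      rw [h2, zsw_one, phiW_cons_ne h0, phiW_nil]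
      simp [pad]
    · -- i + 2 case
      have hE : ∀ j, j < i + 2 → pad j ++ zsw m (j+1) = phiW m (zsw m j) ++ pad (j+1) :=
        fun j hj => ih j hj
      set n := i + 2 with hn
      have h2n : 2 ≤ n := by omega
      rcases lt_trichotomy n m with hcase | hcase | hcase
      · -- 2 ≤ n < m : both first kind
        have hTR := tele_d (m := m) (n-2) 1 (fun j h1 h2 => hE j (by omega))
        have hTU := tele_u (m := m) (n-2) 1 (fun j h1 h2 => hE j (by omega))
        rw [show pad (1+1) = [] from rfl, List.append_nil,
          show pad (1+(n-2)+1) = pad n from pad_congr (by omega)] at hTR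
        rw [show pad (1+(n-2)) = pad (n+1) from pad_congr (by omega), pad_one] at hTU
        have hrw1 : zsw m n = dseg m 1 (n-2) ++ [n-1] ++ useg m 1 (n-2) :=
          zsw_recA h2n (by omega)
        have hrw2 := zsw_recA (m := m) (i := n+1) (by omega) (by omega)
        rw [show n+1-2 = n-1 from by omega, show n+1-1 = n from by omega] at hrw2
        have hds : dseg m 1 (n-1) = dseg m 2 (n-2) ++ [0] := by
          rw [show n-1 = (n-2)+1 from by omega, dseg_succ, zsw_one]
        have hus : useg m 1 (n-1) = [0] ++ useg m 2 (n-2) := by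
          rw [show n-1 = (n-2)+1 from by omega, useg_succ, zsw_one]
        have hmid : phiW m [n-1] = [0, n] := by
          rw [phiW_singleton, phiL_of_ne (by omega), show n-1+1 = n from by omega]
        rw [hrw1, hrw2, hds, hus, phiW_append, phiW_append, hmid]
        simp only [List.append_assoc, List.cons_append, List.nil_append,
          List.singleton_append] at hTU hTR ⊢
        rw [← hTU, hTR]
        all_goals simp [List.append_assoc]
      · -- n = m
        have hTR := tele_d (m := m) (n-2) 1 (fun j h1 h2 => hE j (by omega))
        have hTU := tele_u (m := m) (n-2) 1 (fun j h1 h2 => hE j (by omega))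
        rw [show pad (1+1) = [] from rfl, List.append_nil,
          show pad (1+(n-2)+1) = pad n from pad_congr (by omega)] at hTR
        rw [show pad (1+(n-2)) = pad (n+1) from pad_congr (by omega), pad_one] at hTU
        have hrw1 : zsw m n = dseg m 1 (n-2) ++ [n-1] ++ useg m 1 (n-2) :=
          zsw_recA h2n (le_of_eq hcase)
        have hrw2 := zsw_recB (m := m) (i := n+1) (by omega) hm
        rw [show n+1-m-1 = 0 from by omega, show n+1-m+1 = 2 from by omega,
          show n+1-m = 1 from by omega] at hrw2
        rw [zsw_one, zsw_zero, show m-2 = n-2 from by omega] at hrw2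
        have hmid : phiW m [n-1] = [0] := by
          rw [phiW_singleton, show n-1 = m-1 from by omega, phiL_of_eq]
        rw [hrw1, hrw2, phiW_append, phiW_append, hmid]
        simp only [List.append_assoc, List.cons_append, List.nil_append,
          List.singleton_append, List.append_nil] at hTU hTR ⊢
        rw [← hTU, hTR]
        all_goals simp [List.append_assoc]
      · -- m < n : both second kind
        have hTR := tele_d (m := m) (m-2) (n-m+1) (fun j h1 h2 => hE j (by omega))
        have hTU := tele_u (m := m) (m-2) (n-m+1) (fun j h1 h2 => hE j (by omega))
        rw [show n-m+1+1 = n-m+2 from by omega,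
          show pad (n-m+1+(m-2)+1) = pad n from pad_congr (by omega)] at hTR
        rw [show pad (n-m+1+(m-2)) = pad (n+1) from pad_congr (by omega)] at hTU
        have hrw1 : zsw m n = dseg m (n-m+1) (m-2) ++ zsw m (n-m) ++ zsw m (n-m-1)
            ++ zsw m (n-m) ++ useg m (n-m+1) (m-2) := zsw_recB (by omega) hm
        have hrw2 := zsw_recB (m := m) (i := n+1) (by omega) hm
        rw [show n+1-m-1 = n-m from by omega, show n+1-m+1 = n-m+2 from by omega,
          show n+1-m = n-m+1 from by omega] at hrw2
        rw [show n-m+1+1 = n-m+2 from by omega] at hTU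
        have hE1 := hE (n-m) (by omega)
        have hE2 := hE (n-m-1) (by omega)
        rw [show n-m-1+1 = n-m from by omega] at hE2
        have c1 := fun Y => (append_ctx hE1 Y).symm
        have c2 := fun Y => (append_ctx hE2 Y).symm
        have c0 := fun Y => append_ctx hTR Y
        rw [hrw1, hrw2, phiW_append, phiW_append, phiW_append, phiW_append]
        simp only [List.append_assoc] at hTU hTR ⊢
        rw [← hTU, c1, c2, show pad (n-m-1) = pad (n-m+1) from pad_congr (by omega), c1,
          show pad (n-m) = pad (n-m+2) from pad_congr (by omega), c0]
        all_goals simp [List.append_assoc]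

end PSing
namespace PSing

variable {m : ℕ}

/-- first/last letter of `zsw m i` -/
def hdv (i : ℕ) : ℕ := if i % 2 = 1 then 0 else 1

lemma zsw_shape (hm : 2 ≤ m) :
    ∀ i, 1 ≤ i → (∃ t, zsw m i = hdv i :: t) ∧ (∃ w, zsw m i = w ++ [hdv i]) := by
  intro i
  induction i with
  | zero => omega
  | succ i ih =>
    intro _
    rcases Nat.eq_zero_or_pos i with rfl | hi
    · exact ⟨⟨[], rfl⟩, ⟨[], rfl⟩⟩
    obtain ⟨⟨t, ht⟩, ⟨w, hw⟩⟩ := ih hi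
    have hne : zsw m i ≠ [] := by rw [ht]; simp
    have hE := erel_all hm i
    rcases Nat.even_or_odd i with he | ho
    · -- i even : zsw (i+1) = phiW (zsw i) ++ [0]
      have hie : i % 2 = 0 := Nat.even_iff.mp he
      have hie1 : (i+1) % 2 = 1 := by omega
      have hp1 : pad i = [] := by simp [pad, hie]
      have hp2 : pad (i+1) = [0] := by simp only [pad, if_pos hie1]
      rw [hp1, hp2, List.nil_append] at hE
      have hhd : hdv (i+1) = 0 := by simp only [hdv, if_pos hie1]
      obtain ⟨v, hv⟩ := phiW_head (m := m) hne
      constructor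
      · exact ⟨v ++ [0], by rw [hE, hv, hhd]; simp⟩
      · exact ⟨phiW m (zsw m i), by rw [hE, hhd]⟩
    · -- i odd : [0] ++ zsw (i+1) = phiW (zsw i)
      have hio : i % 2 = 1 := Nat.odd_iff.mp ho
      have hp1 : pad i = [0] := by simp only [pad, if_pos hio]
      have hio1 : (i+1) % 2 = 0 := by omega
      have hp2 : pad (i+1) = [] := by simp [pad, hio1]
      rw [hp1, hp2, List.append_nil] at hE
      have hhd0 : hdv i = 0 := by simp only [hdv, if_pos hio]
      have hhd : hdv (i+1) = 1 := by simp [hdv, hio1]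
      rw [hhd0] at ht hw
      have h0 : (0:ℕ) ≠ m - 1 := by omega
      have hcons : (0:ℕ) :: zsw m (i+1) = phiW m (zsw m i) := hE
      constructor
      · rw [ht, phiW_cons_ne h0] at hcons
        exact ⟨phiW m t, by rw [hhd]; exact (List.cons_injective.eq_iff.mp hcons)⟩
      · rw [hw, phiW_append, phiW_singleton, phiL_of_ne h0] at hcons
        have : (0:ℕ) :: zsw m (i+1) = (phiW m w ++ [0]) ++ [1] := by
          rw [hcons]; simp
        obtain ⟨q, hq⟩ : ∃ q, phiW m w ++ [0] = 0 :: q := by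
          cases w with
          | nil => exact ⟨[], rfl⟩
          | cons a w' =>
            obtain ⟨v, hv⟩ := phiW_head (m := m) (v := a :: w') (by simp)
            exact ⟨v ++ [0], by rw [hv]; simp⟩
        rw [hq] at this
        refine ⟨q, ?_⟩
        rw [hhd]
        exacts [List.cons_injective.eq_iff.mp this]

lemma zsw_ne_nil (hm : 2 ≤ m) {i : ℕ} (hi : 1 ≤ i) : zsw m i ≠ [] := by
  obtain ⟨⟨t, ht⟩, -⟩ := zsw_shape hm i hi
  rw [ht]; simp

lemma suffix_getLast? {u w : List ℕ} (h : u <:+ w) (hu : u ≠ []) :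
    w.getLast? = u.getLast? := by
  obtain ⟨r, rfl⟩ := h
  exact List.getLast?_append_of_ne_nil r hu

lemma suffix_split {u x y : List ℕ} (h : u <:+ x ++ y) :
    u <:+ y ∨ ∃ s, s <:+ x ∧ s ≠ [] ∧ u = s ++ y := by
  obtain ⟨r, hr⟩ := h
  rcases List.append_eq_append_iff.mp hr with ⟨a, ha1, ha2⟩ | ⟨c, hc1, hc2⟩
  · rcases List.eq_nil_or_concat a with rfl | hne
    · left; rw [ha2]; simp
    · right
      refine ⟨a, ⟨r, ha1.symm⟩, ?_, ha2⟩
      obtain ⟨v, b, rfl⟩ := hne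
      simp
  · left; exact ⟨c, hc2.symm⟩

end PSing
namespace PSing

variable {m : ℕ}

lemma suffix_single {s : List ℕ} {x : ℕ} (h : s <:+ [x]) (hne : s ≠ []) : s = [x] := by
  obtain ⟨r, hr⟩ := h
  rcases r with _ | ⟨a, r'⟩
  · simpa using hr
  · exfalso
    apply hne
    have hl := congrArg List.length hr
    simp only [List.length_append, List.length_cons, List.length_nil] at hl
    exact List.length_eq_zero_iff.mp (by omega)

lemma suffix_pair {s : List ℕ} {x y : ℕ} (h : s <:+ [x, y]) (hne : s ≠ []) :
    s = [y] ∨ s = [x, y] := by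
  obtain ⟨r, hr⟩ := h
  rcases r with _ | ⟨a, _ | ⟨b, r'⟩⟩
  · right; simpa using hr
  · left
    simp only [List.cons_append, List.nil_append, List.cons.injEq] at hr
    exact hr.2
  · exfalso
    apply hne
    have hl := congrArg List.length hr
    simp only [List.length_append, List.length_cons, List.length_nil] at hl
    exact List.length_eq_zero_iff.mp (by omega)

/-- suffix desubstitution -/
lemma suffix_desub (hm : 2 ≤ m) : ∀ (v u : List ℕ), u <:+ phiW m v →
    u = [] ∨ (∃ t, t <:+ v ∧ t ≠ [] ∧ u = phiW m t) ∨
      (∃ c t, (c :: t) <:+ v ∧ u = (c+1) :: phiW m t) := by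
  intro v
  induction v with
  | nil =>
    intro u h
    left
    rw [phiW_nil] at h
    exact List.suffix_nil.mp h
  | cons a v' ih =>
    intro u h
    rw [phiW_cons] at h
    rcases suffix_split h with h' | ⟨s, hs, hsne, rfl⟩
    · rcases ih u h' with h1 | ⟨t, h1, h2, h3⟩ | ⟨c, t, h1, h2⟩
      · left; exact h1
      · right; left; exact ⟨t, h1.trans (List.suffix_cons a v'), h2, h3⟩
      · right; right; exact ⟨c, t, h1.trans (List.suffix_cons a v'), h2⟩
    · by_cases ha : a = m - 1
      · subst ha
        rw [phiL_of_eq] at hs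
        have hseq : s = [0] := suffix_single hs hsne
        right; left
        refine ⟨(m-1) :: v', List.suffix_refl _, by simp, ?_⟩
        rw [hseq, phiW_cons_eq]
        rfl
      · rw [phiL_of_ne ha] at hs
        rcases suffix_pair hs hsne with rfl | rfl
        · right; right
          exact ⟨a, v', List.suffix_refl _, rfl⟩
        · right; left
          refine ⟨a :: v', List.suffix_refl _, by simp, ?_⟩
          rw [phiW_cons_ne ha]
          rfl

/-- prefix code property with forced separator 0 -/
lemma pref_desub_zero (hm : 2 ≤ m) : ∀ (x v : List ℕ),
    phiW m x ++ [0] <+: phiW m v → x <+: v := by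
  intro x
  induction x with
  | nil => intro v _; exact List.nil_prefix
  | cons a x' ih =>
    intro v h
    cases v with
    | nil =>
      exfalso
      rw [phiW_nil] at h
      have := List.prefix_nil.mp h
      simp at this
    | cons b v' =>
      by_cases ha : a = m - 1 <;> by_cases hb : b = m - 1
      · subst ha; subst hb
        rw [phiW_cons_eq, phiW_cons_eq] at h
        have h2 : phiW m x' ++ [0] <+: phiW m v' := by
          rw [List.cons_append] at h
          exact (List.cons_prefix_cons.mp h).2
        exact List.cons_prefix_cons.mpr ⟨rfl, ih v' h2⟩
      · subst ha
        exfalso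
        rw [phiW_cons_eq, phiW_cons_ne hb, List.cons_append] at h
        have h2 := (List.cons_prefix_cons.mp h).2
        cases hx : x' with
        | nil =>
          rw [hx, phiW_nil, List.nil_append] at h2
          have := (List.cons_prefix_cons.mp h2).1
          omega
        | cons c x'' =>
          obtain ⟨w, hw⟩ := phiW_head (m := m) (v := x') (by rw [hx]; simp)
          rw [hw, List.cons_append] at h2
          have := (List.cons_prefix_cons.mp h2).1
          omega
      · subst hb
        exfalso
        rw [phiW_cons_ne ha, phiW_cons_eq, List.cons_append, List.cons_append] at h
        have h2 := (List.cons_prefix_cons.mp h).2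
        cases hv : v' with
        | nil =>
          rw [hv, phiW_nil] at h2
          have := List.prefix_nil.mp h2
          simp at this
        | cons c v'' =>
          obtain ⟨w, hw⟩ := phiW_head (m := m) (v := v') (by rw [hv]; simp)
          rw [hw] at h2
          have := (List.cons_prefix_cons.mp h2).1
          omega
      · rw [phiW_cons_ne ha, phiW_cons_ne hb, List.cons_append, List.cons_append] at h
        have h2 := (List.cons_prefix_cons.mp h).2
        have h3 := List.cons_prefix_cons.mp h2
        have hab : a = b := by omega
        subst hab
        exact List.cons_prefix_cons.mpr ⟨rfl, ih v' h3.2⟩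

/-- prefix desubstitution against `phiW v ++ [0]` -/
lemma pref_desub_tail (hm : 2 ≤ m) : ∀ (t v : List ℕ),
    phiW m t <+: phiW m v ++ [0] → t <+: v ∨ ∃ t₀, t = t₀ ++ [m-1] := by
  intro t
  induction t with
  | nil => intro v _; left; exact List.nil_prefix
  | cons a t' ih =>
    intro v h
    cases v with
    | nil =>
      rw [phiW_nil, List.nil_append] at h
      by_cases ha : a = m - 1
      · subst ha
        rw [phiW_cons_eq] at h
        have h2 := (List.cons_prefix_cons.mp h).2
        have h3 : phiW m t' = [] := List.prefix_nil.mp h2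
        have h4 : t' = [] := phiW_eq_nil h3
        right
        exact ⟨[], by rw [h4]; rfl⟩
      · exfalso
        rw [phiW_cons_ne ha] at h
        have h2 := (List.cons_prefix_cons.mp h).2
        have := List.prefix_nil.mp h2
        simp at this
    | cons b v' =>
      by_cases ha : a = m - 1 <;> by_cases hb : b = m - 1
      · subst ha; subst hb
        rw [phiW_cons_eq, phiW_cons_eq, List.cons_append] at h
        have h2 := (List.cons_prefix_cons.mp h).2
        rcases ih v' h2 with h3 | ⟨t₀, rfl⟩
        · left; exact List.cons_prefix_cons.mpr ⟨rfl, h3⟩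
        · right; exact ⟨(m-1) :: t₀, rfl⟩
      · subst ha
        rw [phiW_cons_eq, phiW_cons_ne hb, List.cons_append] at h
        have h2 := (List.cons_prefix_cons.mp h).2
        cases ht : t' with
        | nil => right; exact ⟨[], rfl⟩
        | cons c t'' =>
          exfalso
          obtain ⟨w, hw⟩ := phiW_head (m := m) (v := t') (by rw [ht]; simp)
          rw [hw] at h2
          have := (List.cons_prefix_cons.mp h2).1
          omega
      · subst hb
        exfalso
        rw [phiW_cons_ne ha, phiW_cons_eq, List.cons_append] at h
        have h2 := (List.cons_prefix_cons.mp h).2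
        cases hv : v' with
        | nil =>
          rw [hv, phiW_nil, List.nil_append] at h2
          have := (List.cons_prefix_cons.mp h2).1
          omega
        | cons c v'' =>
          obtain ⟨w, hw⟩ := phiW_head (m := m) (v := v') (by rw [hv]; simp)
          rw [hw, List.cons_append] at h2
          have := (List.cons_prefix_cons.mp h2).1
          omega
      · rw [phiW_cons_ne ha, phiW_cons_ne hb, List.cons_append] at h
        have h2 := (List.cons_prefix_cons.mp h).2
        have h3 := List.cons_prefix_cons.mp h2
        have hab : a = b := by omega
        subst hab
        rcases ih v' h3.2 with h4 | ⟨t₀, rfl⟩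
        · left; exact List.cons_prefix_cons.mpr ⟨rfl, h4⟩
        · right; exact ⟨a :: t₀, rfl⟩

end PSing
namespace PSing

variable {m : ℕ}

lemma zsw_two (hm : 2 ≤ m) : zsw m 2 = [1] := by
  rw [zsw_recA le_rfl hm]; simp [dseg_zero, useg_zero]

lemma main_aux (hm : 2 ≤ m) : ∀ n, ∀ u : List ℕ,
    u <:+ zsw m n → u <+: zsw m (n+1) → u = [] := by
  intro n
  induction n using Nat.strong_induction_on with
  | _ n ih =>
    intro u hsuf hpre
    by_contra hu
    rcases Nat.eq_zero_or_pos n with rfl | hn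
    · exact hu (List.suffix_nil.mp (by simpa [zsw_zero] using hsuf))
    obtain ⟨⟨thead, hhead⟩, -⟩ := zsw_shape hm (n+1) (by omega)
    obtain ⟨a, u', rfl⟩ : ∃ a u', u = a :: u' := by
      cases u with
      | nil => simp at hu
      | cons a u' => exact ⟨_, _, rfl⟩
    have hahead : a = hdv (n+1) := by
      rw [hhead] at hpre
      exact (List.cons_prefix_cons.mp hpre).1
    rcases Nat.even_or_odd n with he | ho
    · -- n even, n ≥ 2
      have hne : n % 2 = 0 := Nat.even_iff.mp he
      have hn2 : 2 ≤ n := by omega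
      have hne1 : (n+1) % 2 = 1 := by omega
      have hdn1 : hdv (n+1) = 0 := by simp [hdv, hne1]
      rw [hdn1] at hahead
      subst hahead
      -- E (n-1) : [0] ++ zsw n = phiW (zsw (n-1))
      have hE := erel_all hm (n-1)
      rw [show n-1+1 = n from by omega,
        show pad (n-1) = [0] from by simp [pad, show (n-1) % 2 = 1 from by omega],
        show pad n = [] from by simp [pad, hne], List.append_nil] at hE
      have hsuf2 : (0 :: u') <:+ phiW m (zsw m (n-1)) := by
        rw [← hE]
        exact hsuf.trans (List.suffix_cons 0 _)
      rcases suffix_desub hm _ _ hsuf2 with h1 | ⟨t, h1, h2, h3⟩ | ⟨c, t, h1, h2⟩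
      · simp at h1
      · -- u = phiW t
        have hEn := erel_all hm n
        rw [show pad n = [] from by simp [pad, hne],
          show pad (n+1) = [0] from by simp [pad, hne1], List.nil_append] at hEn
        have hpre2 : phiW m t <+: phiW m (zsw m n) ++ [0] := by
          rw [← h3, ← hEn]; exact hpre
        rcases pref_desub_tail hm t _ hpre2 with h4 | ⟨t₀, rfl⟩
        · refine h2 (ih (n-1) (by omega) t h1 ?_)
          rw [show n-1+1 = n from by omega]
          exact h4
        · obtain ⟨-, ⟨w, hw⟩⟩ := zsw_shape hm (n-1) (by omega)
          have hdn : hdv (n-1) = 0 := by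
            simp [hdv, show (n-1) % 2 = 1 from by omega]
          rw [hdn] at hw
          have hgl := suffix_getLast? h1 (by simp)
          rw [hw, List.getLast?_concat, List.getLast?_concat] at hgl
          have : (0:ℕ) = m - 1 := by injection hgl
          omega
      · -- u head would be c+1 ≠ 0
        have : (0:ℕ) = c + 1 := by injection h2
        omega
    · -- n odd
      have hno : n % 2 = 1 := Nat.odd_iff.mp ho
      rcases eq_or_lt_of_le (show 1 ≤ n from hn) with h1n | hn2
      · -- n = 1
        rw [← h1n] at hsuf hpre
        rw [zsw_one] at hsuf
        have := suffix_single hsuf hu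
        rw [this, zsw_two hm] at hpre
        have := (List.cons_prefix_cons.mp hpre).1
        omega
      · -- n ≥ 3 odd
        have hn3 : 3 ≤ n := by omega
        have hno1 : (n+1) % 2 = 0 := by omega
        have hdn1 : hdv (n+1) = 1 := by simp [hdv, hno1]
        rw [hdn1] at hahead
        subst hahead
        -- last letter of zsw n is 0
        obtain ⟨-, ⟨w, hw⟩⟩ := zsw_shape hm n (by omega)
        rw [show hdv n = 0 from by simp [hdv, hno]] at hw
        have hul : (1 :: u').getLast? = some 0 := by
          have := suffix_getLast? hsuf hu
          rw [hw, List.getLast?_concat] at this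
          exact this.symm
        obtain ⟨ub, huu⟩ : ∃ ub, (1 :: u' : List ℕ) = ub ++ [0] :=
          ⟨(1 :: u').dropLast, (List.dropLast_append_getLast? 0 hul).symm⟩
        have hune : ub ≠ [] := by
          rintro rfl
          rw [List.nil_append] at huu
          simp at huu
        -- E (n-1) : zsw n = phiW (zsw (n-1)) ++ [0]
        have hE := erel_all hm (n-1)
        rw [show n-1+1 = n from by omega,
          show pad (n-1) = [] from by simp [pad, show (n-1) % 2 = 0 from by omega],
          show pad n = [0] from by simp [pad, hno], List.nil_append] at hE
        have hsufu : ub <:+ phiW m (zsw m (n-1)) := by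
          obtain ⟨r, hr⟩ := hsuf
          rw [huu, hE, ← List.append_assoc] at hr
          exact ⟨r, List.append_cancel_right hr⟩
        obtain ⟨ub', huc⟩ : ∃ ub', ub = 1 :: ub' := by
          cases ub with
          | nil => exact absurd rfl hune
          | cons x ub' =>
            rw [List.cons_append] at huu
            injection huu with h1 h2
            exact ⟨ub', by rw [← h1]⟩
        rcases suffix_desub hm _ _ hsufu with h1 | ⟨t, h1, h2, h3⟩ | ⟨c, t, h1, h2⟩
        · exact hune h1
        · obtain ⟨v, hv⟩ := phiW_head (m := m) h2
          rw [huc, hv] at h3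
          simp at h3
        · -- ub = (c+1) :: phiW t, c :: t <:+ zsw (n-1)
          have hc : c = 0 := by
            rw [huc] at h2
            have : (1:ℕ) = c + 1 := by injection h2
            omega
          subst hc
          -- E n : [0] ++ zsw (n+1) = phiW (zsw n)
          have hEn := erel_all hm n
          rw [show pad n = [0] from by simp [pad, hno],
            show pad (n+1) = [] from by simp [pad, hno1], List.append_nil] at hEn
          have hpre2 : phiW m (0 :: t) ++ [0] <+: phiW m (zsw m n) := by
            rw [← hEn, phiW_cons_ne (by omega : (0:ℕ) ≠ m - 1)]
            have : (0:ℕ) :: 1 :: u' <+: 0 :: zsw m (n+1) :=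
              List.cons_prefix_cons.mpr ⟨rfl, hpre⟩
            rw [huu, h2] at this
            simpa using this
          have h0t := pref_desub_zero hm _ _ hpre2
          have : (0 :: t : List ℕ) = [] := by
            refine ih (n-1) (by omega) (0 :: t) h1 ?_
            rw [show n-1+1 = n from by omega]
            exact h0t
          simp at this

end PSing

/-- For all `n ≥ 0`, the only word that is simultaneously a suffix of `z_{n-1}` and a
prefix of `zₙ` is the empty word (recall `z_{n-1} = zsw m n` and `zₙ = zsw m (n+1)`). -/
theorem psingular_suffix_prefix (m : ℕ) (hm : 2 ≤ m) (n : ℕ) (u : List ℕ)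
    (hsuf : u <:+ zsw m n) (hpre : u <+: zsw m (n + 1)) :
    u = [] :=
  PSing.main_aux hm n u hsuf hpre
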